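/- Under hyper-generalized recurrence with recurrence 1-forms A and B, if r = 0, then the conharmonic curvature tensor satisfies ∇_U ℂ = A(U)·ℂ for all U ∈ V, i.e. the space is conharmonically recurrent with recurrence form A. (Theorem 3.2(b).) -/

import Mathlib

open scoped BigOperators

/-- Kulkarni–Nomizu product of two bilinear forms (as real-valued functions). -/
def KN {V : Type*} (h k : V → V → ℝ) (X Y Z W : V) : ℝ :=
  h X Z * k Y W + h Y W * k X Z - h X W * k Y Z - h Y Z * k X W

/-- The tensor `G(X,Y,Z,W) = g(X,Z)g(Y,W) - g(Y,Z)g(X,W)`. -/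
def Gten {V : Type*} (g : V → V → ℝ) (X Y Z W : V) : ℝ :=
  g X Z * g Y W - g Y Z * g X W

/-- Derivation action of the curvature endomorphism `Rend U V` on a quadrilinear form `T`. -/
def derAct {V : Type*} (Rend : V → V → V → V) (T : V → V → V → V → ℝ)
    (U V' X Y Z W : V) : ℝ :=
  - T (Rend U V' X) Y Z W - T X (Rend U V' Y) Z W
    - T X Y (Rend U V' Z) W - T X Y Z (Rend U V' W)

theorem hgr_conharmonically_recurrent_of_zero_scalar {V : Type*} [AddCommGroup V] [Module ℝ V]
    (n : ℕ) (hn : 3 ≤ n)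
    (b : Module.Basis (Fin n) ℝ V) (e' : Fin n → V)
    (g : V →ₗ[ℝ] V →ₗ[ℝ] ℝ)
    (hg_symm : ∀ X Y, g X Y = g Y X)
    (hg_nd : ∀ X, (∀ Y, g X Y = 0) → X = 0)
    (hdual : ∀ i j, g (b i) (e' j) = if i = j then (1 : ℝ) else 0)
    (R : V →ₗ[ℝ] V →ₗ[ℝ] V →ₗ[ℝ] V →ₗ[ℝ] ℝ)
    (hR_ne : R ≠ 0)
    (hR_anti : ∀ X Y Z W, R X Y Z W = - R Y X Z W)
    (hR_pair : ∀ X Y Z W, R X Y Z W = R Z W X Y)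
    (Ric : V → V → ℝ)
    (hRic : ∀ X Z, Ric X Z = ∑ i, R X (b i) Z (e' i))
    (r : ℝ) (hr : r = ∑ i, Ric (b i) (e' i))
    (D : V →ₗ[ℝ] V →ₗ[ℝ] V →ₗ[ℝ] V →ₗ[ℝ] V →ₗ[ℝ] ℝ)
    (hBianchi : ∀ X Y Z W U, D X Y Z W U + D Y Z X W U + D Z X Y W U = 0)
    (A B : V →ₗ[ℝ] ℝ) (hA : A ≠ 0) (hB : B ≠ 0)
    (hHGR : ∀ U X Y Z W,
      D U X Y Z W = A U * R X Y Z W + B U * KN (fun a c => g a c) Ric X Y Z W)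
    (DRic : V → V → V → ℝ)
    (hDRicDef : ∀ U X Z, DRic U X Z = ∑ i, D U X (b i) Z (e' i))
    (Cc : V → V → V → V → ℝ)
    (hCc : ∀ X Y Z W, Cc X Y Z W
      = R X Y Z W - (1 / ((n : ℝ) - 2)) * KN (fun a c => g a c) Ric X Y Z W)
    (DC : V → V → V → V → V → ℝ)
    (hDC : ∀ U X Y Z W, DC U X Y Z W
      = D U X Y Z W - (1 / ((n : ℝ) - 2)) * KN (fun a c => g a c) (DRic U) X Y Z W)
    (hr0 : r = 0)
    :
    ∀ U X Y Z W, DC U X Y Z W = A U * Cc X Y Z W := by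
  have hne : ((n:ℝ) - 2) ≠ 0 := by
    have h3 : (3:ℝ) ≤ (n:ℝ) := by exact_mod_cast hn
    intro h; nlinarith
  -- g X (e' j) is the j-th coordinate of X in basis b
  have hrepr : ∀ (X : V) (j : Fin n), g X (e' j) = b.repr X j := by
    intro X j
    conv_lhs => rw [← b.sum_repr X]
    simp [map_sum, hdual, Finset.sum_ite_eq', -Module.Basis.sum_repr]
  have exp1 : ∀ (X : V), ∑ i, g X (e' i) • b i = X := by
    intro X
    simp only [hrepr]
    exact b.sum_repr X
  have exp2 : ∀ (Z : V), ∑ i, g (b i) Z • e' i = Z := by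
    intro Z
    have key : ∀ Y : V, g ((∑ i, g (b i) Z • e' i) - Z) Y = 0 := by
      intro Y
      rw [hg_symm]
      have h1 : g Y (∑ i, g (b i) Z • e' i) = ∑ i, g (b i) Z * g Y (e' i) := by
        simp [Finset.mul_sum, mul_comm]
      have h2 : g Y Z = ∑ i, b.repr Y i * g (b i) Z := by
        conv_lhs => rw [← b.sum_repr Y]
        simp [map_sum, -Module.Basis.sum_repr]
      simp only [map_sub, h1, hrepr, h2]
      rw [sub_eq_zero]
      exact Finset.sum_congr rfl (fun i _ => mul_comm _ _)
    exact sub_eq_zero.mp (hg_nd _ key)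
  -- Ric is "linear" via the trace formula
  have hRicL1 : ∀ (X Z : V), ∑ i, g X (e' i) * Ric (b i) Z = Ric X Z := by
    intro X Z
    conv_rhs => rw [hRic]
    simp only [hRic, Finset.mul_sum]
    rw [Finset.sum_comm]
    refine Finset.sum_congr rfl (fun j _ => ?_)
    conv_rhs => rw [← exp1 X]
    simp [map_sum, Finset.sum_apply, smul_eq_mul]
  have hRicL2 : ∀ (X Z : V), ∑ i, g (b i) Z * Ric X (e' i) = Ric X Z := by
    intro X Z
    conv_rhs => rw [hRic]
    simp only [hRic, Finset.mul_sum]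
    rw [Finset.sum_comm]
    refine Finset.sum_congr rfl (fun j _ => ?_)
    conv_rhs => rw [← exp2 Z]
    simp [map_sum, Finset.sum_apply, smul_eq_mul, Finset.mul_sum]
  -- the contracted KN product
  have hKNsum : ∀ (X Z : V),
      ∑ i, KN (fun a c => g a c) Ric X (b i) Z (e' i) = ((n:ℝ) - 2) * Ric X Z := by
    intro X Z
    simp only [KN]
    rw [Finset.sum_sub_distrib, Finset.sum_sub_distrib, Finset.sum_add_distrib]
    have t1 : ∑ i, g X Z * Ric (b i) (e' i) = 0 := by
      rw [← Finset.mul_sum, ← hr, hr0, mul_zero]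
    have t2 : ∑ i, g (b i) (e' i) * Ric X Z = (n:ℝ) * Ric X Z := by
      simp [hdual, Finset.sum_ite_eq]
    have t3 : ∑ i, g X (e' i) * Ric (b i) Z = Ric X Z := hRicL1 X Z
    have t4 : ∑ i, g (b i) Z * Ric X (e' i) = Ric X Z := hRicL2 X Z
    rw [t1, t2, t3, t4]
    ring
  -- the derivative of Ric
  have hDRic : ∀ (U X Z : V),
      DRic U X Z = (A U + ((n:ℝ) - 2) * B U) * Ric X Z := by
    intro U X Z
    rw [hDRicDef]
    simp only [hHGR]
    rw [Finset.sum_add_distrib, ← Finset.mul_sum, ← Finset.mul_sum, ← hRic, hKNsum]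
    ring
  intro U X Y Z W
  rw [hDC, hHGR, hCc]
  simp only [KN, hDRic]
  field_simp
  ring
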